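/- Let (A, E) be a Frobenius category with P its full subcategory of projective objects, and let F ⊆ P be a full additive subcategory satisfying conditions (1) and (2): every object A fits into a sequence A →(i_A) F_A →(p_A) P_A with i_A a left F-approximation, P_A ∈ P and p_A a pseudo-cokernel of i_A, and dually a sequence P^A →(i^A) F^A →(p^A) A with p^A a right F-approximation, P^A ∈ P and i^A a pseudo-kernel of p^A. Then for every conflation X →i Y →d Z of (A, E), the morphism π(i) is a kernel of π(d) in A/[F] and π(d) is a cokernel of π(i) in A/[F]; in particular every member of E_F is a kernel-cokernel pair in A/[F]. -/

import Mathlib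

universe v u

open CategoryTheory Limits

namespace Paper

variable {A : Type u} [Category.{v} A]

section Defs
variable [Preadditive A]

/-- `i` is a kernel of `d`. -/
def IsKer {X Y Z : A} (i : X ⟶ Y) (d : Y ⟶ Z) : Prop :=
  i ≫ d = 0 ∧ ∀ ⦃W : A⦄ (g : W ⟶ Y), g ≫ d = 0 → ∃! g' : W ⟶ X, g' ≫ i = g

/-- `d` is a cokernel of `i`. -/
def IsCoker {X Y Z : A} (i : X ⟶ Y) (d : Y ⟶ Z) : Prop :=
  i ≫ d = 0 ∧ ∀ ⦃W : A⦄ (g : Y ⟶ W), i ≫ g = 0 → ∃! g' : Z ⟶ W, d ≫ g' = g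

/-- An exact structure in the sense of Quillen (following Keller's axioms) on an
additive category `A`: a class of kernel-cokernel pairs (conflations), closed under
isomorphism, satisfying the axioms (Ex0), (Ex1), (Ex1op), (Ex2), (Ex2op). -/
structure ExactStructure (A : Type u) [Category.{v} A] [Preadditive A] where
  /-- the class of conflations `X ⟶ Y ⟶ Z` -/
  IsConflation : ∀ ⦃X Y Z : A⦄, (X ⟶ Y) → (Y ⟶ Z) → Prop
  ker_of_conflation : ∀ ⦃X Y Z : A⦄ {i : X ⟶ Y} {d : Y ⟶ Z}, IsConflation i d → IsKer i d
  coker_of_conflation : ∀ ⦃X Y Z : A⦄ {i : X ⟶ Y} {d : Y ⟶ Z}, IsConflation i d → IsCoker i d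
  iso_closed : ∀ ⦃X Y Z X' Y' Z' : A⦄ {i : X ⟶ Y} {d : Y ⟶ Z} {i' : X' ⟶ Y'} {d' : Y' ⟶ Z'}
    (eX : X ≅ X') (eY : Y ≅ Y') (eZ : Z ≅ Z'),
    i ≫ eY.hom = eX.hom ≫ i' → d ≫ eZ.hom = eY.hom ≫ d' →
    IsConflation i d → IsConflation i' d'
  ex0 : ∀ ⦃Z : A⦄, IsZero Z → ∃ (X : A) (i : X ⟶ Z), IsConflation i (𝟙 Z)
  ex1 : ∀ ⦃Y Z W : A⦄ {d : Y ⟶ Z} {e : Z ⟶ W},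
    (∃ (X : A) (i : X ⟶ Y), IsConflation i d) → (∃ (X : A) (i : X ⟶ Z), IsConflation i e) →
    ∃ (X : A) (i : X ⟶ Y), IsConflation i (d ≫ e)
  ex1op : ∀ ⦃X Y W : A⦄ {i : X ⟶ Y} {j : Y ⟶ W},
    (∃ (Z : A) (d : Y ⟶ Z), IsConflation i d) → (∃ (Z : A) (d : W ⟶ Z), IsConflation j d) →
    ∃ (Z : A) (d : W ⟶ Z), IsConflation (i ≫ j) d
  ex2 : ∀ ⦃Y Z Z' : A⦄ (d : Y ⟶ Z) (f : Z' ⟶ Z),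
    (∃ (X : A) (i : X ⟶ Y), IsConflation i d) →
    ∃ (Y' : A) (d' : Y' ⟶ Z') (f' : Y' ⟶ Y),
      IsPullback d' f' f d ∧ ∃ (X : A) (i : X ⟶ Y'), IsConflation i d'
  ex2op : ∀ ⦃X Y X' : A⦄ (i : X ⟶ Y) (f : X ⟶ X'),
    (∃ (Z : A) (d : Y ⟶ Z), IsConflation i d) →
    ∃ (Y' : A) (i' : X' ⟶ Y') (f' : Y ⟶ Y'),
      IsPushout i f f' i' ∧ ∃ (Z : A) (d : Y' ⟶ Z), IsConflation i' d

namespace ExactStructure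

variable (E : ExactStructure A)

/-- `d` is a deflation. -/
def IsDeflation {Y Z : A} (d : Y ⟶ Z) : Prop :=
  ∃ (X : A) (i : X ⟶ Y), E.IsConflation i d

/-- `i` is an inflation. -/
def IsInflation {X Y : A} (i : X ⟶ Y) : Prop :=
  ∃ (Z : A) (d : Y ⟶ Z), E.IsConflation i d

/-- projective object: every deflation onto it splits. -/
def Proj (P : A) : Prop :=
  ∀ ⦃Y : A⦄ (d : Y ⟶ P), E.IsDeflation d → ∃ s : P ⟶ Y, s ≫ d = 𝟙 P

/-- injective object: every inflation out of it splits. -/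
def Inj (I : A) : Prop :=
  ∀ ⦃Y : A⦄ (i : I ⟶ Y), E.IsInflation i → ∃ r : Y ⟶ I, i ≫ r = 𝟙 I

/-- enough projective objects -/
def EnoughProj : Prop :=
  ∀ X : A, ∃ (P : A) (d : P ⟶ X), E.Proj P ∧ E.IsDeflation d

/-- enough injective objects -/
def EnoughInj : Prop :=
  ∀ X : A, ∃ (I : A) (i : X ⟶ I), E.Inj I ∧ E.IsInflation i

/-- A Frobenius category: enough projectives, enough injectives, and the two classes coincide. -/
structure IsFrobenius : Prop where
  enoughProj : E.EnoughProj
  enoughInj : E.EnoughInj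
  proj_iff_inj : ∀ P : A, E.Proj P ↔ E.Inj P

end ExactStructure

end Defs

end Paper
namespace Paper

variable {A : Type u} [Category.{v} A] [Preadditive A]

/-- `f` factors through an object of `F`. -/
def FactorsThru (F : Set A) {X Y : A} (f : X ⟶ Y) : Prop :=
  ∃ Z ∈ F, ∃ (g : X ⟶ Z) (h : Z ⟶ Y), g ≫ h = f

/-- The ideal `[F](X, Y)` of morphisms factoring through objects of `F`
(as an additive subgroup, taking the subgroup generated by such morphisms;
for an additive subcategory `F` this is exactly the set of such morphisms). -/
def fIdeal (F : Set A) (X Y : A) : AddSubgroup (X ⟶ Y) :=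
  AddSubgroup.closure {f | FactorsThru F f}

lemma fIdeal_comp_right (F : Set A) {X Y W : A} {f : X ⟶ Y} (hf : f ∈ fIdeal F X Y)
    (v : Y ⟶ W) : f ≫ v ∈ fIdeal F X W := by
  have : f ≫ v = ((Preadditive.rightComp X v : (X ⟶ Y) →+ (X ⟶ W)) f) := rfl
  rw [this]
  have hmap : (fIdeal F X Y).map (Preadditive.rightComp X v) ≤ fIdeal F X W := by
    rw [fIdeal, AddMonoidHom.map_closure]
    apply (AddSubgroup.closure_le _).2
    rintro x ⟨y, ⟨Z, hZ, g, h, rfl⟩, rfl⟩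
    exact AddSubgroup.subset_closure ⟨Z, hZ, g, h ≫ v,
      show g ≫ h ≫ v = (g ≫ h) ≫ v from (Category.assoc g h v).symm⟩
  exact hmap (AddSubgroup.mem_map_of_mem _ hf)

lemma fIdeal_comp_left (F : Set A) {X Y W : A} (u : W ⟶ X) {f : X ⟶ Y}
    (hf : f ∈ fIdeal F X Y) : u ≫ f ∈ fIdeal F W Y := by
  have : u ≫ f = ((Preadditive.leftComp Y u : (X ⟶ Y) →+ (W ⟶ Y)) f) := rfl
  rw [this]
  have hmap : (fIdeal F X Y).map (Preadditive.leftComp Y u) ≤ fIdeal F W Y := by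
    rw [fIdeal, AddMonoidHom.map_closure]
    apply (AddSubgroup.closure_le _).2
    rintro x ⟨y, ⟨Z, hZ, g, h, rfl⟩, rfl⟩
    exact AddSubgroup.subset_closure ⟨Z, hZ, u ≫ g, h,
      show (u ≫ g) ≫ h = u ≫ g ≫ h from Category.assoc u g h⟩
  exact hmap (AddSubgroup.mem_map_of_mem _ hf)

/-- Objects of the factor category `A/[F]`. -/
structure FObj (A : Type u) (F : Set A) : Type u where
  obj : A

/-- The factor category `A/[F]`: same objects as `A`, morphisms are
residue classes modulo the ideal `[F]`. -/
instance factorCategory (F : Set A) : Category.{v} (FObj A F) where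
  Hom X Y := (X.obj ⟶ Y.obj) ⧸ fIdeal F X.obj Y.obj
  id X := QuotientAddGroup.mk (𝟙 X.obj)
  comp {X Y Z} f g :=
    Quotient.liftOn₂ f g (fun f g => QuotientAddGroup.mk (f ≫ g))
      (by
        intro a₁ a₂ b₁ b₂ h₁ h₂
        have h₁' : -a₁ + b₁ ∈ fIdeal F X.obj Y.obj := QuotientAddGroup.eq.mp (Quotient.sound h₁)
        have h₂' : -a₂ + b₂ ∈ fIdeal F Y.obj Z.obj := QuotientAddGroup.eq.mp (Quotient.sound h₂)
        show QuotientAddGroup.mk (a₁ ≫ a₂) = QuotientAddGroup.mk (b₁ ≫ b₂)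
        refine QuotientAddGroup.eq.mpr ?_
        have heq : -(a₁ ≫ a₂) + b₁ ≫ b₂ = (-a₁ + b₁) ≫ a₂ + b₁ ≫ (-a₂ + b₂) := by
          simp only [Preadditive.add_comp, Preadditive.comp_add, Preadditive.neg_comp,
            Preadditive.comp_neg]
          abel
        rw [heq]
        exact add_mem (fIdeal_comp_right F h₁' a₂) (fIdeal_comp_left F b₁ h₂'))
  id_comp {X Y} f := by
    induction f using Quotient.inductionOn with
    | h f => exact congrArg QuotientAddGroup.mk (Category.id_comp f)
  comp_id {X Y} f := by
    induction f using Quotient.inductionOn with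
    | h f => exact congrArg QuotientAddGroup.mk (Category.comp_id f)
  assoc {W X Y Z} f g h := by
    induction f using Quotient.inductionOn with
    | h f =>
      induction g using Quotient.inductionOn with
      | h g =>
        induction h using Quotient.inductionOn with
        | h h => exact congrArg QuotientAddGroup.mk (Category.assoc f g h)

instance factorPreadditive (F : Set A) : Preadditive (FObj A F) where
  homGroup X Y := inferInstanceAs (AddCommGroup ((X.obj ⟶ Y.obj) ⧸ fIdeal F X.obj Y.obj))
  add_comp P Q R f f' g := by
    induction f using Quotient.inductionOn with
    | h f =>
      induction f' using Quotient.inductionOn with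
      | h f' =>
        induction g using Quotient.inductionOn with
        | h g =>
          show QuotientAddGroup.mk ((f + f') ≫ g) =
            QuotientAddGroup.mk (f ≫ g) + QuotientAddGroup.mk (f' ≫ g)
          rw [← QuotientAddGroup.mk_add]
          exact congrArg QuotientAddGroup.mk (Preadditive.add_comp _ _ _ f f' g)
  comp_add P Q R f g g' := by
    induction f using Quotient.inductionOn with
    | h f =>
      induction g using Quotient.inductionOn with
      | h g =>
        induction g' using Quotient.inductionOn with
        | h g' =>
          show QuotientAddGroup.mk (f ≫ (g + g')) =
            QuotientAddGroup.mk (f ≫ g) + QuotientAddGroup.mk (f ≫ g')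
          rw [← QuotientAddGroup.mk_add]
          exact congrArg QuotientAddGroup.mk (Preadditive.comp_add _ _ _ f g g')

/-- The canonical projection functor `π : A ⟶ A/[F]`. -/
def fproj (F : Set A) : A ⥤ FObj A F where
  obj X := ⟨X⟩
  map f := QuotientAddGroup.mk f
  map_id _ := rfl
  map_comp _ _ := rfl

/-- The class `E_F` of composable pairs in `A/[F]` isomorphic to the image of a
conflation of `(A, E)` under the projection functor. -/
def MemEF (E : ExactStructure A) (F : Set A) ⦃X Y Z : FObj A F⦄
    (i : X ⟶ Y) (d : Y ⟶ Z) : Prop :=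
  ∃ (X' Y' Z' : A) (i' : X' ⟶ Y') (d' : Y' ⟶ Z'), E.IsConflation i' d' ∧
    ∃ (eX : (fproj F).obj X' ≅ X) (eY : (fproj F).obj Y' ≅ Y) (eZ : (fproj F).obj Z' ≅ Z),
      (fproj F).map i' ≫ eY.hom = eX.hom ≫ i ∧ (fproj F).map d' ≫ eZ.hom = eY.hom ≫ d

section Hyp
variable [HasZeroObject A] [HasBinaryBiproducts A]

/-- The hypotheses of Theorem 3.1: `F` is a full additive subcategory of the
projective objects satisfying the approximation conditions (1) and (2). -/
structure FactorHyp (E : ExactStructure A) (F : Set A) : Prop where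
  /-- every object of `F` is projective -/
  proj : ∀ P ∈ F, E.Proj P
  /-- `F` is additive: it contains a zero object -/
  zero_mem : ∃ Z ∈ F, IsZero Z
  /-- `F` is additive: it is closed under direct sums -/
  sum_mem : ∀ X Y : A, X ∈ F → Y ∈ F → ∃ W ∈ F, Nonempty (W ≅ X ⊞ Y)
  /-- condition (1): `A ⟶ F_A ⟶ P_A` with `i_A` a left `F`-approximation and
  `p_A` a pseudo-cokernel of `i_A`, `P_A` projective -/
  cond1 : ∀ X : A, ∃ (FA PA : A) (iA : X ⟶ FA) (pA : FA ⟶ PA), FA ∈ F ∧ E.Proj PA ∧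
    (∀ F₁ ∈ F, ∀ g : X ⟶ F₁, ∃ t : FA ⟶ F₁, iA ≫ t = g) ∧
    iA ≫ pA = 0 ∧ (∀ ⦃W : A⦄ (c : FA ⟶ W), iA ≫ c = 0 → ∃ t : PA ⟶ W, pA ≫ t = c)
  /-- condition (2): `P^A ⟶ F^A ⟶ A` with `p^A` a right `F`-approximation and
  `i^A` a pseudo-kernel of `p^A`, `P^A` projective -/
  cond2 : ∀ X : A, ∃ (PA FA : A) (iA : PA ⟶ FA) (pA : FA ⟶ X), FA ∈ F ∧ E.Proj PA ∧
    (∀ F₁ ∈ F, ∀ g : F₁ ⟶ X, ∃ t : F₁ ⟶ FA, t ≫ pA = g) ∧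
    iA ≫ pA = 0 ∧ (∀ ⦃W : A⦄ (c : W ⟶ FA), c ≫ pA = 0 → ∃ t : W ⟶ PA, t ≫ iA = c)

end Hyp

end Paper
namespace Paper

open CategoryTheory Limits

section AuxGeneral

variable {C : Type*} [Category C] [Preadditive C]

lemma IsKer.mono' {X Y Z : C} {i : X ⟶ Y} {d : Y ⟶ Z} (h : IsKer i d)
    {W : C} {u v : W ⟶ X} (huv : u ≫ i = v ≫ i) : u = v := by
  obtain ⟨g, -, hu⟩ := h.2 (u ≫ i) (by rw [Category.assoc, h.1, comp_zero])
  exact (hu u rfl).trans (hu v huv.symm).symm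

lemma IsCoker.epi' {X Y Z : C} {i : X ⟶ Y} {d : Y ⟶ Z} (h : IsCoker i d)
    {W : C} {u v : Z ⟶ W} (huv : d ≫ u = d ≫ v) : u = v := by
  obtain ⟨g, -, hu⟩ := h.2 (d ≫ u) (by rw [← Category.assoc, h.1, zero_comp])
  exact (hu u rfl).trans (hu v huv.symm).symm

lemma IsKer.of_iso {X Y Z X' Y' Z' : C} {i : X ⟶ Y} {d : Y ⟶ Z}
    {i' : X' ⟶ Y'} {d' : Y' ⟶ Z'} (eX : X' ≅ X) (eY : Y' ≅ Y) (eZ : Z' ≅ Z)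
    (hi : i' ≫ eY.hom = eX.hom ≫ i) (hd : d' ≫ eZ.hom = eY.hom ≫ d)
    (h : IsKer i' d') : IsKer i d := by
  have hi2 : i = eX.inv ≫ i' ≫ eY.hom := by rw [hi]; simp
  have hd2 : d' = eY.hom ≫ d ≫ eZ.inv := by rw [← Category.assoc, ← hd]; simp
  constructor
  · rw [hi2]
    have : i' ≫ eY.hom ≫ d = (i' ≫ d') ≫ eZ.hom := by
      rw [Category.assoc, hd]
    simp [this, h.1]
  · intro W g hg
    have hg' : (g ≫ eY.inv) ≫ d' = 0 := by
      rw [hd2]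
      simp only [Category.assoc, Iso.inv_hom_id_assoc]
      rw [← Category.assoc, hg, zero_comp]
    obtain ⟨g₀, hg₀, huniq⟩ := h.2 (g ≫ eY.inv) hg'
    refine ⟨g₀ ≫ eX.hom, ?_, ?_⟩
    · show (g₀ ≫ eX.hom) ≫ i = g
      rw [Category.assoc, ← hi, ← Category.assoc, hg₀, Category.assoc]
      simp
    · intro y hy
      have : (y ≫ eX.inv) ≫ i' = g ≫ eY.inv := by
        have hi3 : i' = eX.hom ≫ i ≫ eY.inv := by
          rw [← Category.assoc, ← hi]; simp
        rw [hi3]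
        simp only [Category.assoc, Iso.inv_hom_id_assoc]
        rw [← Category.assoc, hy]
      have := huniq (y ≫ eX.inv) this
      rw [← this, Category.assoc]; simp

lemma IsCoker.of_iso {X Y Z X' Y' Z' : C} {i : X ⟶ Y} {d : Y ⟶ Z}
    {i' : X' ⟶ Y'} {d' : Y' ⟶ Z'} (eX : X' ≅ X) (eY : Y' ≅ Y) (eZ : Z' ≅ Z)
    (hi : i' ≫ eY.hom = eX.hom ≫ i) (hd : d' ≫ eZ.hom = eY.hom ≫ d)
    (h : IsCoker i' d') : IsCoker i d := by
  have hi2 : i = eX.inv ≫ i' ≫ eY.hom := by rw [hi]; simp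
  have hd2 : d = eY.inv ≫ d' ≫ eZ.hom := by rw [hd]; simp
  constructor
  · rw [hi2]
    have : i' ≫ eY.hom ≫ d = (i' ≫ d') ≫ eZ.hom := by
      rw [Category.assoc, hd]
    simp [this, h.1]
  · intro W g hg
    have hg' : i' ≫ (eY.hom ≫ g) = 0 := by
      have : i' ≫ eY.hom ≫ g = eX.hom ≫ i ≫ g := by
        rw [← Category.assoc, hi, Category.assoc]
      rw [this, hg, comp_zero]
    obtain ⟨g₀, hg₀, huniq⟩ := h.2 (eY.hom ≫ g) hg'
    refine ⟨eZ.inv ≫ g₀, ?_, ?_⟩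
    · show d ≫ (eZ.inv ≫ g₀) = g
      rw [hd2]
      simp only [Category.assoc, Iso.hom_inv_id_assoc]
      rw [hg₀]; simp
    · intro y hy
      replace hy : d ≫ y = g := hy
      have : d' ≫ (eZ.hom ≫ y) = eY.hom ≫ g := by
        rw [← Category.assoc, hd, Category.assoc, hy]
      have := huniq (eZ.hom ≫ y) this
      rw [← this]; simp

end AuxGeneral

section AuxQuot

variable {A : Type u} [Category.{v} A] [Preadditive A]

lemma fproj_map_comp (F : Set A) {X Y Z : A} (f : X ⟶ Y) (g : Y ⟶ Z) :
    (fproj F).map (f ≫ g) = (fproj F).map f ≫ (fproj F).map g := rfl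

lemma fproj_eq_zero_iff (F : Set A) {X Y : A} (f : X ⟶ Y) :
    (fproj F).map f = 0 ↔ f ∈ fIdeal F X Y :=
  QuotientAddGroup.eq_zero_iff f

lemma fproj_eq_iff (F : Set A) {X Y : A} (f g : X ⟶ Y) :
    (fproj F).map f = (fproj F).map g ↔ f - g ∈ fIdeal F X Y :=
  QuotientAddGroup.eq_iff_sub_mem

lemma fproj_surj (F : Set A) {W : FObj A F} {Z : A} (g : W ⟶ (fproj F).obj Z) :
    ∃ f : W.obj ⟶ Z, (fproj F).map f = g :=
  QuotientAddGroup.mk_surjective g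

lemma fproj_surj' (F : Set A) {Z : A} {W : FObj A F} (g : (fproj F).obj Z ⟶ W) :
    ∃ f : Z ⟶ W.obj, (fproj F).map f = g :=
  QuotientAddGroup.mk_surjective g

lemma factorsThru_of_mem_fIdeal [HasBinaryBiproducts A] {F : Set A}
    (hzero : ∃ Z ∈ F, IsZero Z)
    (hsum : ∀ X Y : A, X ∈ F → Y ∈ F → ∃ W ∈ F, Nonempty (W ≅ X ⊞ Y))
    {X Y : A} {f : X ⟶ Y} (hf : f ∈ fIdeal F X Y) : FactorsThru F f := by
  let S : AddSubgroup (X ⟶ Y) :=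
    { carrier := {f | FactorsThru F f}
      zero_mem' := by
        obtain ⟨Z, hZ, -⟩ := hzero
        exact ⟨Z, hZ, 0, 0, by simp⟩
      add_mem' := by
        rintro a b ⟨Z₁, h₁, g₁, k₁, e₁⟩ ⟨Z₂, h₂, g₂, k₂, e₂⟩
        obtain ⟨W, hW, ⟨e⟩⟩ := hsum Z₁ Z₂ h₁ h₂
        refine ⟨W, hW, biprod.lift g₁ g₂ ≫ e.inv, e.hom ≫ biprod.desc k₁ k₂, ?_⟩
        rw [Category.assoc, Iso.inv_hom_id_assoc, biprod.lift_desc, e₁, e₂]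
      neg_mem' := by
        rintro a ⟨Z, hZ, g, k, e⟩
        exact ⟨Z, hZ, -g, k, by rw [Preadditive.neg_comp, e]⟩ }
  exact (AddSubgroup.closure_le S).2 (fun x hx => hx) hf

lemma mem_fIdeal_of_factorsThru {F : Set A} {X Y : A} {f : X ⟶ Y}
    (h : FactorsThru F f) : f ∈ fIdeal F X Y :=
  AddSubgroup.subset_closure h

end AuxQuot

section AuxExact

variable {A : Type u} [Category.{v} A] [Preadditive A]

lemma lift_through_deflation (E : ExactStructure A) {P Y Z : A} (hP : E.Proj P)
    {d : Y ⟶ Z} (hd : E.IsDeflation d) (m : P ⟶ Z) : ∃ s : P ⟶ Y, s ≫ d = m := by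
  obtain ⟨Y', d', f', hpb, hdefl⟩ := E.ex2 d m hd
  obtain ⟨s', hs'⟩ := hP d' hdefl
  refine ⟨s' ≫ f', ?_⟩
  rw [Category.assoc, ← hpb.w, ← Category.assoc, hs', Category.id_comp]

lemma extend_through_inflation (E : ExactStructure A) {I X Y : A} (hI : E.Inj I)
    {i : X ⟶ Y} (hi : E.IsInflation i) (m : X ⟶ I) : ∃ n : Y ⟶ I, i ≫ n = m := by
  obtain ⟨Y', i', f', hpo, hinfl⟩ := E.ex2op i m hi
  obtain ⟨r, hr⟩ := hI i' hinfl
  refine ⟨f' ≫ r, ?_⟩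
  rw [← Category.assoc, hpo.w, Category.assoc, hr, Category.comp_id]

variable [HasZeroObject A] [HasBinaryBiproducts A]

/-- If `h ≫ i` lies in the ideal `[F]` for an inflation `i`, so does `h`. -/
lemma mem_of_comp_inflation (E : ExactStructure A) (F : Set A) (hF : FactorHyp E F)
    {X Y Z W : A} {i : X ⟶ Y} {d : Y ⟶ Z} (hc : E.IsConflation i d)
    {h : W ⟶ X} (hh : h ≫ i ∈ fIdeal F W Y) : h ∈ fIdeal F W X := by
  have hker := E.ker_of_conflation hc
  obtain ⟨F₀, hF₀, a, b, hab⟩ := factorsThru_of_mem_fIdeal hF.zero_mem hF.sum_mem hh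
  obtain ⟨FW, PW, iW, pW, hFW, hPW, happ, hip, hpk⟩ := hF.cond1 W
  obtain ⟨t, ht⟩ := happ F₀ hF₀ a
  have hik : iW ≫ (t ≫ b) = h ≫ i := by rw [← Category.assoc, ht, hab]
  have h1 : iW ≫ ((t ≫ b) ≫ d) = 0 := by
    rw [← Category.assoc, hik, Category.assoc, hker.1, comp_zero]
  obtain ⟨m, hm⟩ := hpk ((t ≫ b) ≫ d) h1
  obtain ⟨n, hn⟩ := lift_through_deflation E hPW ⟨X, i, hc⟩ m
  have h2 : (t ≫ b - pW ≫ n) ≫ d = 0 := by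
    rw [Preadditive.sub_comp, Category.assoc pW n d, hn, hm, sub_self]
  obtain ⟨w, hw, -⟩ := hker.2 (t ≫ b - pW ≫ n) h2
  have h3 : (iW ≫ w) ≫ i = h ≫ i := by
    rw [Category.assoc, hw, Preadditive.comp_sub, hik, ← Category.assoc, hip,
      zero_comp, sub_zero]
  exact mem_fIdeal_of_factorsThru ⟨FW, hFW, iW, w, hker.mono' h3⟩

/-- If `d ≫ h` lies in the ideal `[F]` for a deflation `d`, so does `h`. -/
lemma mem_of_deflation_comp (E : ExactStructure A) (hE : E.IsFrobenius)
    (F : Set A) (hF : FactorHyp E F)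
    {X Y Z W : A} {i : X ⟶ Y} {d : Y ⟶ Z} (hc : E.IsConflation i d)
    {h : Z ⟶ W} (hh : d ≫ h ∈ fIdeal F Y W) : h ∈ fIdeal F Z W := by
  have hcok := E.coker_of_conflation hc
  obtain ⟨F₀, hF₀, a, b, hab⟩ := factorsThru_of_mem_fIdeal hF.zero_mem hF.sum_mem hh
  obtain ⟨P', F', i', p', hF', hP', happ, hip, hpk⟩ := hF.cond2 W
  obtain ⟨t, ht⟩ := happ F₀ hF₀ b
  have hkp : (a ≫ t) ≫ p' = d ≫ h := by rw [Category.assoc, ht, hab]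
  have h1 : (i ≫ (a ≫ t)) ≫ p' = 0 := by
    rw [Category.assoc, hkp, ← Category.assoc, hcok.1, zero_comp]
  obtain ⟨m, hm⟩ := hpk (i ≫ (a ≫ t)) h1
  have hPinj : E.Inj P' := (hE.proj_iff_inj P').1 hP'
  obtain ⟨n, hn⟩ := extend_through_inflation E hPinj ⟨Z, d, hc⟩ m
  have h2 : i ≫ (a ≫ t - n ≫ i') = 0 := by
    rw [Preadditive.comp_sub, ← Category.assoc i n i', hn, hm, sub_self]
  obtain ⟨w, hw, -⟩ := hcok.2 (a ≫ t - n ≫ i') h2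
  have h3 : d ≫ (w ≫ p') = d ≫ h := by
    rw [← Category.assoc, hw, Preadditive.sub_comp, hkp, Category.assoc, hip,
      comp_zero, sub_zero]
  exact mem_fIdeal_of_factorsThru ⟨F', hF', w, p', hcok.epi' h3⟩

end AuxExact

/-- **Theorem 2 (Step 1 in the proof of Theorem 3.1).** Under the hypotheses of
Theorem 3.1, for every conflation `X ⟶i Y ⟶d Z` of `(A, E)` the morphism `π(i)` is a
kernel of `π(d)` in `A/[F]` and `π(d)` is a cokernel of `π(i)` in `A/[F]`; consequently
every member of the class `E_F` is a kernel-cokernel pair in `A/[F]`. -/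
theorem factor_category_kernel_cokernel_pairs
    {A : Type u} [Category.{v} A] [Preadditive A] [HasZeroObject A] [HasBinaryBiproducts A]
    (E : ExactStructure A) (hE : E.IsFrobenius) (F : Set A) (hF : FactorHyp E F) :
    (∀ ⦃X Y Z : A⦄ (i : X ⟶ Y) (d : Y ⟶ Z), E.IsConflation i d →
      IsKer ((fproj F).map i) ((fproj F).map d) ∧
      IsCoker ((fproj F).map i) ((fproj F).map d)) ∧
    (∀ ⦃X Y Z : FObj A F⦄ (i : X ⟶ Y) (d : Y ⟶ Z), MemEF E F i d →
      IsKer i d ∧ IsCoker i d) := by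
  have main : ∀ ⦃X Y Z : A⦄ (i : X ⟶ Y) (d : Y ⟶ Z), E.IsConflation i d →
      IsKer ((fproj F).map i) ((fproj F).map d) ∧
      IsCoker ((fproj F).map i) ((fproj F).map d) := by
    intro X Y Z i d hc
    have hker := E.ker_of_conflation hc
    have hcok := E.coker_of_conflation hc
    have hzero : (fproj F).map i ≫ (fproj F).map d = 0 := by
      rw [← fproj_map_comp, hker.1, fproj_eq_zero_iff]
      exact zero_mem _
    constructor
    · -- kernel
      refine ⟨hzero, ?_⟩
      intro W g0 hg0
      obtain ⟨g, hg⟩ := fproj_surj F g0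
      have hmem : g ≫ d ∈ fIdeal F W.obj Z := by
        rw [← fproj_eq_zero_iff, fproj_map_comp, hg]; exact hg0
      obtain ⟨F₀, hF₀, a, b, hab⟩ :=
        factorsThru_of_mem_fIdeal hF.zero_mem hF.sum_mem hmem
      obtain ⟨PZ, FZ, iZ, pZ, hFZ, hPZ, happ, -, -⟩ := hF.cond2 Z
      obtain ⟨t, ht⟩ := happ F₀ hF₀ b
      obtain ⟨s, hs⟩ := lift_through_deflation E (hF.proj FZ hFZ) ⟨X, i, hc⟩ pZ
      have h2 : (g - a ≫ t ≫ s) ≫ d = 0 := by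
        rw [Preadditive.sub_comp, Category.assoc, Category.assoc, hs,
          ← Category.assoc, Category.assoc, ht, hab, sub_self]
      obtain ⟨g₁, hg₁, -⟩ := hker.2 (g - a ≫ t ≫ s) h2
      have hfac : a ≫ t ≫ s ∈ fIdeal F W.obj Y :=
        mem_fIdeal_of_factorsThru ⟨F₀, hF₀, a, t ≫ s, rfl⟩
      have key : (fproj F).map g₁ ≫ (fproj F).map i = g0 := by
        rw [← fproj_map_comp, hg₁, ← hg, fproj_eq_iff]
        simpa using (fIdeal F W.obj Y).neg_mem hfac
      refine ⟨(fproj F).map g₁, key, ?_⟩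
      intro y hy
      obtain ⟨y₁, hy₁⟩ := fproj_surj F y
      have hmem2 : (y₁ - g₁) ≫ i ∈ fIdeal F W.obj Y := by
        rw [← fproj_eq_zero_iff, fproj_map_comp]
        have : (fproj F).map (y₁ - g₁) =
            (fproj F).map y₁ - (fproj F).map g₁ := QuotientAddGroup.mk_sub _ _ _
        rw [this, Preadditive.sub_comp, hy₁, key]; exact sub_eq_zero.2 hy
      have := mem_of_comp_inflation E F hF hc hmem2
      rw [← hy₁]
      exact (fproj_eq_iff F _ _).2 this
    · -- cokernel
      refine ⟨hzero, ?_⟩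
      intro W g0 hg0
      obtain ⟨g, hg⟩ := fproj_surj' F g0
      have hmem : i ≫ g ∈ fIdeal F X W.obj := by
        rw [← fproj_eq_zero_iff, fproj_map_comp, hg]; exact hg0
      obtain ⟨F₀, hF₀, a, b, hab⟩ :=
        factorsThru_of_mem_fIdeal hF.zero_mem hF.sum_mem hmem
      obtain ⟨FX, PX, iX, pX, hFX, hPX, happ, -, -⟩ := hF.cond1 X
      obtain ⟨t, ht⟩ := happ F₀ hF₀ a
      have hFXinj : E.Inj FX := (hE.proj_iff_inj FX).1 (hF.proj FX hFX)
      obtain ⟨j, hj⟩ := extend_through_inflation E hFXinj ⟨Z, d, hc⟩ iX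
      have h2 : i ≫ (g - j ≫ t ≫ b) = 0 := by
        rw [Preadditive.comp_sub, ← Category.assoc, hj, ← Category.assoc, ht, hab,
          sub_self]
      obtain ⟨g₁, hg₁, -⟩ := hcok.2 (g - j ≫ t ≫ b) h2
      have hfac : j ≫ t ≫ b ∈ fIdeal F Y W.obj :=
        mem_fIdeal_of_factorsThru ⟨FX, hFX, j, t ≫ b, rfl⟩
      have key : (fproj F).map d ≫ (fproj F).map g₁ = g0 := by
        rw [← fproj_map_comp, hg₁, ← hg, fproj_eq_iff]
        simpa using (fIdeal F Y W.obj).neg_mem hfac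
      refine ⟨(fproj F).map g₁, key, ?_⟩
      intro y hy
      obtain ⟨y₁, hy₁⟩ := fproj_surj' F y
      have hmem2 : d ≫ (y₁ - g₁) ∈ fIdeal F Y W.obj := by
        rw [← fproj_eq_zero_iff, fproj_map_comp]
        have : (fproj F).map (y₁ - g₁) =
            (fproj F).map y₁ - (fproj F).map g₁ := QuotientAddGroup.mk_sub _ _ _
        rw [this, Preadditive.comp_sub, hy₁, key]; exact sub_eq_zero.2 hy
      have := mem_of_deflation_comp E hE F hF hc hmem2
      rw [← hy₁]
      exact (fproj_eq_iff F _ _).2 this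
  refine ⟨main, ?_⟩
  rintro X Y Z i d ⟨X', Y', Z', i', d', hc, eX, eY, eZ, h1, h2⟩
  obtain ⟨hk, hck⟩ := main i' d' hc
  exact ⟨hk.of_iso eX eY eZ h1 h2, hck.of_iso eX eY eZ h1 h2⟩

end Paper
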